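/- Fix a DMC W, R ≥ 0, erasure exponent x ≥ 0, input distribution P with α·E_r(R/α, P) ≥ x, and joint second-phase type λ. Define E(R, x, α, P, λ) for α E_r(R/α,P) ≥ x as the minimum over (R″, R′, T) with R″ ≥ R′ ≥ R, T ≥ 0, and α·E_sp(R″/α, P) + R′ − R + T ≤ x, of α·E_sp(R′/α, P) + R″ − R + (1−α)·h(T/(1−α), λ). Then for fixed (R, x, P, λ), the function α ↦ E(R, x, α, P, λ) is convex on the interval [α*, 1], where α* is the unique solution of α E_r(R/α, P) = x. -/

import Mathlib

open scoped BigOperators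

noncomputable section

variable {X Y : Type} [Fintype X] [Fintype Y]

/-- Conditional Kullback-Leibler divergence `D(V‖W|P)`. -/
def condKL {X Y : Type} [Fintype X] [Fintype Y]
    (P : X → ℝ) (V W : X → Y → ℝ) : ℝ :=
  ∑ a, P a * ∑ b, V a b * Real.log (V a b / W a b)

/-- Mutual information `I(P,V)`. -/
def mutInf {X Y : Type} [Fintype X] [Fintype Y]
    (P : X → ℝ) (V : X → Y → ℝ) : ℝ :=
  ∑ a, ∑ b, P a * V a b * Real.log (V a b / ∑ a', P a' * V a' b)

/-- A stochastic matrix. -/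
def IsChannel {X Y : Type} [Fintype X] [Fintype Y] (V : X → Y → ℝ) : Prop :=
  (∀ a b, 0 ≤ V a b) ∧ (∀ a, ∑ b, V a b = 1)

/-- Sphere packing exponent `E_sp(R,P)`. -/
def EspP (W : X → Y → ℝ) (P : X → ℝ) (R : ℝ) : ℝ :=
  sInf {d | ∃ V : X → Y → ℝ, IsChannel V ∧ mutInf P V ≤ R ∧ d = condKL P V W}

/-- Random coding exponent `E_r(R,P)`. -/
def ErP (W : X → Y → ℝ) (P : X → ℝ) (R : ℝ) : ℝ :=
  sInf {d | ∃ V : X → Y → ℝ, IsChannel V ∧ d = condKL P V W + max (mutInf P V - R) 0}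

/-- `W_a(y|x₁,x₂) = W(y|x₁)`. -/
def Wacc (W : X → Y → ℝ) : X × X → Y → ℝ := fun p y => W p.1 y

/-- `W_r(y|x₁,x₂) = W(y|x₂)`. -/
def Wrej (W : X → Y → ℝ) : X × X → Y → ℝ := fun p y => W p.2 y

/-- `h(T,λ) = min { D(U‖W_r|λ) : D(U‖W_a|λ) ≤ T }`. -/
def hTwo (W : X → Y → ℝ) (lam : X × X → ℝ) (T : ℝ) : ℝ :=
  sInf {d | ∃ U : X × X → Y → ℝ, IsChannel U ∧
    condKL lam U (Wacc W) ≤ T ∧ d = condKL lam U (Wrej W)}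

/-- The exponent `E(R,x,α,P,λ)` of the two-phase scheme:
minimum of `α·E_sp(R′/α,P) + R″ − R + (1−α)·h(T/(1−α),λ)` over
`R″ ≥ R′ ≥ R`, `T ≥ 0` with `α·E_sp(R″/α,P) + R′ − R + T ≤ x`. -/
def Efun (W : X → Y → ℝ) (lam : X × X → ℝ) (P : X → ℝ) (R x α : ℝ) : ℝ :=
  sInf {v | ∃ R'' R' T : ℝ, R ≤ R' ∧ R' ≤ R'' ∧ 0 ≤ T ∧
    α * EspP W P (R'' / α) + R' - R + T ≤ x ∧
    v = α * EspP W P (R' / α) + R'' - R + (1 - α) * hTwo W lam (T / (1 - α))}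

end



private lemma eps_le {a b : ℝ} (h : ∀ ε : ℝ, 0 < ε → a ≤ b + ε) : a ≤ b := by
  by_contra hc
  push_neg at hc
  have := h ((a - b) / 2) (by linarith)
  linarith

private lemma g_scale {β : ℝ} (v m : ℝ) (hβ : β ≠ 0) :
    β * v * Real.log (β * v / (β * m)) = β * (v * Real.log (v / m)) := by
  rw [mul_div_mul_left v m hβ]; ring

/-- Two-point joint convexity of `(v,m) ↦ v log (v/m)` under the Lean junk conventions,
assuming `v > 0 → m > 0` at both points. -/
private lemma g_conv {β1 β2 v1 v2 m1 m2 : ℝ} (hβ1 : 0 ≤ β1) (hβ2 : 0 ≤ β2)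
    (hβ : β1 + β2 = 1) (hv1 : 0 ≤ v1) (hv2 : 0 ≤ v2) (hm1 : 0 ≤ m1) (hm2 : 0 ≤ m2)
    (h1 : 0 < v1 → 0 < m1) (h2 : 0 < v2 → 0 < m2) :
    (β1 * v1 + β2 * v2) * Real.log ((β1 * v1 + β2 * v2) / (β1 * m1 + β2 * m2)) ≤
      β1 * (v1 * Real.log (v1 / m1)) + β2 * (v2 * Real.log (v2 / m2)) := by
  rcases eq_or_lt_of_le hm1 with hm1' | hm1'
  · -- m1 = 0, hence v1 = 0
    have hv1' : v1 = 0 := by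
      by_contra hne
      exact absurd (h1 (lt_of_le_of_ne hv1 (Ne.symm hne))) (by rw [← hm1']; exact lt_irrefl 0)
    subst hv1'
    rcases eq_or_lt_of_le hβ2 with hβ2' | hβ2'
    · simp [← hβ2', ← hm1']
    · rw [← hm1']
      simp only [mul_zero, zero_add, Real.log_zero, add_zero]
      rw [g_scale v2 m2 (ne_of_gt hβ2')]
      simp
  rcases eq_or_lt_of_le hm2 with hm2' | hm2'
  · have hv2' : v2 = 0 := by
      by_contra hne
      exact absurd (h2 (lt_of_le_of_ne hv2 (Ne.symm hne))) (by rw [← hm2']; exact lt_irrefl 0)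
    subst hv2'
    rcases eq_or_lt_of_le hβ1 with hβ1' | hβ1'
    · simp [← hβ1', ← hm2']
    · rw [← hm2']
      simp only [mul_zero, add_zero, Real.log_zero, zero_add]
      rw [g_scale v1 m1 (ne_of_gt hβ1')]
      simp
  -- main case: m1, m2 > 0
  have hmγ : 0 < β1 * m1 + β2 * m2 := by
    rcases (show 0 < β1 ∨ 0 < β2 by by_contra h; push_neg at h; linarith) with h | h
    · nlinarith
    · nlinarith
  have hw1 : (0:ℝ) ≤ β1 * m1 / (β1 * m1 + β2 * m2) := by positivity
  have hw2 : (0:ℝ) ≤ β2 * m2 / (β1 * m1 + β2 * m2) := by positivity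
  have hwsum : β1 * m1 / (β1 * m1 + β2 * m2) + β2 * m2 / (β1 * m1 + β2 * m2) = 1 := by
    field_simp
  have hkey := Real.convexOn_mul_log.2 (Set.mem_Ici.2 (div_nonneg hv1 hm1))
    (Set.mem_Ici.2 (div_nonneg hv2 hm2)) hw1 hw2 hwsum
  simp only [smul_eq_mul] at hkey
  have harg : β1 * m1 / (β1 * m1 + β2 * m2) * (v1 / m1) +
      β2 * m2 / (β1 * m1 + β2 * m2) * (v2 / m2) =
      (β1 * v1 + β2 * v2) / (β1 * m1 + β2 * m2) := by
    field_simp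
  rw [harg] at hkey
  have := mul_le_mul_of_nonneg_left hkey (le_of_lt hmγ)
  calc (β1 * v1 + β2 * v2) * Real.log ((β1 * v1 + β2 * v2) / (β1 * m1 + β2 * m2))
      = (β1 * m1 + β2 * m2) * ((β1 * v1 + β2 * v2) / (β1 * m1 + β2 * m2) *
          Real.log ((β1 * v1 + β2 * v2) / (β1 * m1 + β2 * m2))) := by
        field_simp
    _ ≤ (β1 * m1 + β2 * m2) * (β1 * m1 / (β1 * m1 + β2 * m2) * (v1 / m1 * Real.log (v1 / m1)) +
          β2 * m2 / (β1 * m1 + β2 * m2) * (v2 / m2 * Real.log (v2 / m2))) := this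
    _ = β1 * (v1 * Real.log (v1 / m1)) + β2 * (v2 * Real.log (v2 / m2)) := by
        field_simp

/-- Convexity in `v` of `v ↦ v log (v/w)` for fixed `w ≥ 0` (junk conventions). -/
private lemma g_conv_w {β1 β2 v1 v2 w : ℝ} (hβ1 : 0 ≤ β1) (hβ2 : 0 ≤ β2)
    (hβ : β1 + β2 = 1) (hv1 : 0 ≤ v1) (hv2 : 0 ≤ v2) (hw : 0 ≤ w) :
    (β1 * v1 + β2 * v2) * Real.log ((β1 * v1 + β2 * v2) / w) ≤
      β1 * (v1 * Real.log (v1 / w)) + β2 * (v2 * Real.log (v2 / w)) := by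
  rcases eq_or_lt_of_le hw with hw' | hw'
  · simp [← hw']
  · have hkey := g_conv (m1 := w) (m2 := w) hβ1 hβ2 hβ hv1 hv2 hw hw
      (fun _ => hw') (fun _ => hw')
    rwa [show β1 * w + β2 * w = w by rw [← add_mul, hβ, one_mul]] at hkey

/-- Pointwise lower bound `-w ≤ v log (v/w)` (junk conventions). -/
private lemma g_lb {v w : ℝ} (hv : 0 ≤ v) (hw : 0 ≤ w) : -w ≤ v * Real.log (v / w) := by
  rcases eq_or_lt_of_le hv with hv' | hv'
  · simp [← hv']; exact hw
  rcases eq_or_lt_of_le hw with hw' | hw'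
  · simp [← hw']
  have h1 : Real.log (w / v) ≤ w / v - 1 := Real.log_le_sub_one_of_pos (by positivity)
  have h2 : Real.log (v / w) = -Real.log (w / v) := by
    rw [← Real.log_inv, inv_div]
  rw [h2]
  have h3 : v * Real.log (w / v) ≤ v * (w / v - 1) := by
    exact mul_le_mul_of_nonneg_left h1 hv
  have h4 : v * (w / v - 1) = w - v := by field_simp
  nlinarith

noncomputable section AuxLemmas

variable {X Y : Type} [Fintype X] [Fintype Y]

private lemma isChannel_mix {V1 V2 : X → Y → ℝ} (hV1 : IsChannel V1) (hV2 : IsChannel V2)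
    {β1 β2 : ℝ} (hβ1 : 0 ≤ β1) (hβ2 : 0 ≤ β2) (hβ : β1 + β2 = 1) :
    IsChannel (fun a b => β1 * V1 a b + β2 * V2 a b) := by
  constructor
  · intro a b
    have := hV1.1 a b; have := hV2.1 a b
    positivity
  · intro a
    rw [Finset.sum_add_distrib, ← Finset.mul_sum, ← Finset.mul_sum, hV1.2 a, hV2.2 a]
    linarith

private lemma condKL_ge (P : X → ℝ) (V W' : X → Y → ℝ) (hP0 : ∀ a, 0 ≤ P a)
    (hP1 : ∑ a, P a = 1) (hV : ∀ a b, 0 ≤ V a b) (hW' : IsChannel W') :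
    -1 ≤ condKL P V W' := by
  unfold condKL
  have hrow : ∀ a, -1 ≤ ∑ b, V a b * Real.log (V a b / W' a b) := by
    intro a
    calc (-1 : ℝ) = ∑ b, -(W' a b) := by
          rw [Finset.sum_neg_distrib, hW'.2 a]
      _ ≤ ∑ b, V a b * Real.log (V a b / W' a b) :=
          Finset.sum_le_sum fun b _ => g_lb (hV a b) (hW'.1 a b)
  calc (-1 : ℝ) = ∑ a, P a * (-1) := by
        rw [← Finset.sum_mul, hP1, one_mul]
    _ ≤ ∑ a, P a * ∑ b, V a b * Real.log (V a b / W' a b) :=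
        Finset.sum_le_sum fun a _ => mul_le_mul_of_nonneg_left (hrow a) (hP0 a)

private lemma condKL_self (P : X → ℝ) (V : X → Y → ℝ) : condKL P V V = 0 := by
  unfold condKL
  apply Finset.sum_eq_zero
  intro a _
  have h : ∑ b, V a b * Real.log (V a b / V a b) = 0 := by
    apply Finset.sum_eq_zero
    intro b _
    rcases eq_or_ne (V a b) 0 with h | h
    · simp [h]
    · rw [div_self h, Real.log_one, mul_zero]
  rw [h, mul_zero]

private lemma condKL_mix (P : X → ℝ) (V1 V2 W' : X → Y → ℝ) (hP0 : ∀ a, 0 ≤ P a)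
    (hV1 : ∀ a b, 0 ≤ V1 a b) (hV2 : ∀ a b, 0 ≤ V2 a b) (hW' : ∀ a b, 0 ≤ W' a b)
    {β1 β2 : ℝ} (hβ1 : 0 ≤ β1) (hβ2 : 0 ≤ β2) (hβ : β1 + β2 = 1) :
    condKL P (fun a b => β1 * V1 a b + β2 * V2 a b) W' ≤
      β1 * condKL P V1 W' + β2 * condKL P V2 W' := by
  unfold condKL
  rw [Finset.mul_sum, Finset.mul_sum, ← Finset.sum_add_distrib]
  apply Finset.sum_le_sum
  intro a _
  have hrow : ∑ b, (β1 * V1 a b + β2 * V2 a b) * Real.log ((β1 * V1 a b + β2 * V2 a b) / W' a b)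
      ≤ β1 * (∑ b, V1 a b * Real.log (V1 a b / W' a b)) +
        β2 * (∑ b, V2 a b * Real.log (V2 a b / W' a b)) := by
    rw [Finset.mul_sum, Finset.mul_sum, ← Finset.sum_add_distrib]
    exact Finset.sum_le_sum fun b _ => g_conv_w hβ1 hβ2 hβ (hV1 a b) (hV2 a b) (hW' a b)
  calc P a * ∑ b, (β1 * V1 a b + β2 * V2 a b) *
          Real.log ((β1 * V1 a b + β2 * V2 a b) / W' a b)
      ≤ P a * (β1 * (∑ b, V1 a b * Real.log (V1 a b / W' a b)) +
          β2 * (∑ b, V2 a b * Real.log (V2 a b / W' a b))) :=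
        mul_le_mul_of_nonneg_left hrow (hP0 a)
    _ = β1 * (P a * ∑ b, V1 a b * Real.log (V1 a b / W' a b)) +
        β2 * (P a * ∑ b, V2 a b * Real.log (V2 a b / W' a b)) := by ring

private lemma mutInf_mix (P : X → ℝ) (V1 V2 : X → Y → ℝ) (hP0 : ∀ a, 0 ≤ P a)
    (hV1 : ∀ a b, 0 ≤ V1 a b) (hV2 : ∀ a b, 0 ≤ V2 a b)
    {β1 β2 : ℝ} (hβ1 : 0 ≤ β1) (hβ2 : 0 ≤ β2) (hβ : β1 + β2 = 1) :
    mutInf P (fun a b => β1 * V1 a b + β2 * V2 a b) ≤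
      β1 * mutInf P V1 + β2 * mutInf P V2 := by
  unfold mutInf
  rw [Finset.mul_sum, Finset.mul_sum, ← Finset.sum_add_distrib]
  refine Finset.sum_le_sum fun a _ => ?_
  rw [Finset.mul_sum, Finset.mul_sum, ← Finset.sum_add_distrib]
  refine Finset.sum_le_sum fun b _ => ?_
  have hm : ∑ a', P a' * (β1 * V1 a' b + β2 * V2 a' b) =
      β1 * (∑ a', P a' * V1 a' b) + β2 * (∑ a', P a' * V2 a' b) := by
    rw [Finset.mul_sum, Finset.mul_sum, ← Finset.sum_add_distrib]
    exact Finset.sum_congr rfl fun _ _ => by ring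
  rw [hm]
  rcases eq_or_lt_of_le (hP0 a) with hPa | hPa
  · rw [← hPa]; simp
  · have hsum1 : (0:ℝ) ≤ ∑ a', P a' * V1 a' b :=
      Finset.sum_nonneg fun a' _ => mul_nonneg (hP0 a') (hV1 a' b)
    have hsum2 : (0:ℝ) ≤ ∑ a', P a' * V2 a' b :=
      Finset.sum_nonneg fun a' _ => mul_nonneg (hP0 a') (hV2 a' b)
    have k := g_conv (v1 := V1 a b) (v2 := V2 a b) (m1 := ∑ a', P a' * V1 a' b)
      (m2 := ∑ a', P a' * V2 a' b) hβ1 hβ2 hβ (hV1 a b) (hV2 a b) hsum1 hsum2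
      (fun hv => lt_of_lt_of_le (mul_pos hPa hv)
        (Finset.single_le_sum (fun a' _ => mul_nonneg (hP0 a') (hV1 a' b)) (Finset.mem_univ a)))
      (fun hv => lt_of_lt_of_le (mul_pos hPa hv)
        (Finset.single_le_sum (fun a' _ => mul_nonneg (hP0 a') (hV2 a' b)) (Finset.mem_univ a)))
    calc P a * (β1 * V1 a b + β2 * V2 a b) *
            Real.log ((β1 * V1 a b + β2 * V2 a b) /
              (β1 * (∑ a', P a' * V1 a' b) + β2 * (∑ a', P a' * V2 a' b)))
        = P a * ((β1 * V1 a b + β2 * V2 a b) *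
            Real.log ((β1 * V1 a b + β2 * V2 a b) /
              (β1 * (∑ a', P a' * V1 a' b) + β2 * (∑ a', P a' * V2 a' b)))) := by ring
      _ ≤ P a * (β1 * (V1 a b * Real.log (V1 a b / ∑ a', P a' * V1 a' b)) +
            β2 * (V2 a b * Real.log (V2 a b / ∑ a', P a' * V2 a' b))) :=
          mul_le_mul_of_nonneg_left k hPa.le
      _ = β1 * (P a * V1 a b * Real.log (V1 a b / ∑ a', P a' * V1 a' b)) +
          β2 * (P a * V2 a b * Real.log (V2 a b / ∑ a', P a' * V2 a' b)) := by ring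

private lemma mutInf_const (P : X → ℝ) (hP1 : ∑ a, P a = 1) (q : Y → ℝ) :
    mutInf P (fun _ b => q b) = 0 := by
  unfold mutInf
  apply Finset.sum_eq_zero
  intro a _
  apply Finset.sum_eq_zero
  intro b _
  have h : ∑ a', P a' * q b = q b := by rw [← Finset.sum_mul, hP1, one_mul]
  rw [h]
  rcases eq_or_ne (q b) 0 with h' | h'
  · simp [h']
  · rw [div_self h', Real.log_one, mul_zero]

end AuxLemmas

noncomputable section AuxLemmas2

variable {X Y : Type} [Fintype X] [Fintype Y]

private lemma espP_bdd (W : X → Y → ℝ) (hW : IsChannel W) (P : X → ℝ)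
    (hP0 : ∀ a, 0 ≤ P a) (hP1 : ∑ a, P a = 1) (ρ : ℝ) :
    BddBelow {d | ∃ V : X → Y → ℝ, IsChannel V ∧ mutInf P V ≤ ρ ∧ d = condKL P V W} :=
  ⟨-1, fun _ ⟨V, hV, _, hd⟩ => hd ▸ condKL_ge P V W hP0 hP1 hV.1 hW⟩

private lemma espP_nonempty (W : X → Y → ℝ) (hW : IsChannel W) (P : X → ℝ)
    (hP1 : ∑ a, P a = 1) (ρ : ℝ) (hρ : 0 ≤ ρ) :
    Set.Nonempty {d | ∃ V : X → Y → ℝ, IsChannel V ∧ mutInf P V ≤ ρ ∧ d = condKL P V W} := by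
  have hX : (Finset.univ : Finset X).Nonempty := by
    by_contra h
    rw [Finset.not_nonempty_iff_eq_empty] at h
    rw [show (∑ a, P a) = ∑ a ∈ (Finset.univ : Finset X), P a from rfl, h,
      Finset.sum_empty] at hP1
    exact one_ne_zero hP1.symm
  obtain ⟨a0, _⟩ := hX
  refine ⟨condKL P (fun _ b => W a0 b) W, ⟨fun _ b => W a0 b,
    ⟨fun _ b => hW.1 a0 b, fun _ => hW.2 a0⟩, ?_, rfl⟩⟩
  rw [mutInf_const P hP1]
  exact hρ

private lemma espP_ge (W : X → Y → ℝ) (hW : IsChannel W) (P : X → ℝ)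
    (hP0 : ∀ a, 0 ≤ P a) (hP1 : ∑ a, P a = 1) (ρ : ℝ) (hρ : 0 ≤ ρ) :
    -1 ≤ EspP W P ρ :=
  le_csInf (espP_nonempty W hW P hP1 ρ hρ)
    fun _ ⟨V, hV, _, hd⟩ => hd ▸ condKL_ge P V W hP0 hP1 hV.1 hW

private lemma espP_le (W : X → Y → ℝ) (hW : IsChannel W) (P : X → ℝ)
    (hP0 : ∀ a, 0 ≤ P a) (hP1 : ∑ a, P a = 1) (ρ : ℝ) {V : X → Y → ℝ}
    (hV : IsChannel V) (hI : mutInf P V ≤ ρ) :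
    EspP W P ρ ≤ condKL P V W :=
  csInf_le (espP_bdd W hW P hP0 hP1 ρ) ⟨V, hV, hI, rfl⟩

private lemma wacc_channel {W : X → Y → ℝ} (hW : IsChannel W) : IsChannel (Wacc W) :=
  ⟨fun p y => hW.1 p.1 y, fun p => hW.2 p.1⟩

private lemma wrej_channel {W : X → Y → ℝ} (hW : IsChannel W) : IsChannel (Wrej W) :=
  ⟨fun p y => hW.1 p.2 y, fun p => hW.2 p.2⟩

private lemma hTwo_bdd (W : X → Y → ℝ) (hW : IsChannel W) (lam : X × X → ℝ)
    (hl0 : ∀ p, 0 ≤ lam p) (hl1 : ∑ p, lam p = 1) (T : ℝ) :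
    BddBelow {d | ∃ U : X × X → Y → ℝ, IsChannel U ∧
      condKL lam U (Wacc W) ≤ T ∧ d = condKL lam U (Wrej W)} :=
  ⟨-1, fun _ ⟨U, hU, _, hd⟩ => hd ▸ condKL_ge lam U (Wrej W) hl0 hl1 hU.1 (wrej_channel hW)⟩

private lemma hTwo_nonempty (W : X → Y → ℝ) (hW : IsChannel W) (lam : X × X → ℝ)
    (T : ℝ) (hT : 0 ≤ T) :
    Set.Nonempty {d | ∃ U : X × X → Y → ℝ, IsChannel U ∧
      condKL lam U (Wacc W) ≤ T ∧ d = condKL lam U (Wrej W)} :=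
  ⟨condKL lam (Wacc W) (Wrej W), ⟨Wacc W, wacc_channel hW,
    by rw [condKL_self]; exact hT, rfl⟩⟩

private lemma hTwo_ge (W : X → Y → ℝ) (hW : IsChannel W) (lam : X × X → ℝ)
    (hl0 : ∀ p, 0 ≤ lam p) (hl1 : ∑ p, lam p = 1) (T : ℝ) (hT : 0 ≤ T) :
    -1 ≤ hTwo W lam T :=
  le_csInf (hTwo_nonempty W hW lam T hT)
    fun _ ⟨U, hU, _, hd⟩ => hd ▸ condKL_ge lam U (Wrej W) hl0 hl1 hU.1 (wrej_channel hW)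

private lemma hTwo_le (W : X → Y → ℝ) (hW : IsChannel W) (lam : X × X → ℝ)
    (hl0 : ∀ p, 0 ≤ lam p) (hl1 : ∑ p, lam p = 1) (T : ℝ) {U : X × X → Y → ℝ}
    (hU : IsChannel U) (hc : condKL lam U (Wacc W) ≤ T) :
    hTwo W lam T ≤ condKL lam U (Wrej W) :=
  csInf_le (hTwo_bdd W hW lam hl0 hl1 T) ⟨U, hU, hc, rfl⟩

private lemma hTwo_anti (W : X → Y → ℝ) (hW : IsChannel W) (lam : X × X → ℝ)
    (hl0 : ∀ p, 0 ≤ lam p) (hl1 : ∑ p, lam p = 1) {T T' : ℝ} (hT : 0 ≤ T) (hTT' : T ≤ T') :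
    hTwo W lam T' ≤ hTwo W lam T :=
  csInf_le_csInf (hTwo_bdd W hW lam hl0 hl1 T') (hTwo_nonempty W hW lam T hT)
    fun _ ⟨U, hU, hc, hd⟩ => ⟨U, hU, hc.trans hTT', hd⟩

end AuxLemmas2

set_option maxHeartbeats 1000000

noncomputable section AuxLemmas3

variable {X Y : Type} [Fintype X] [Fintype Y]

/-- Perspective inequality for `E_sp`. -/
private lemma pe (W : X → Y → ℝ) (hW : IsChannel W) (P : X → ℝ)
    (hP0 : ∀ a, 0 ≤ P a) (hP1 : ∑ a, P a = 1)
    {α1 α2 γ1 γ2 r1 r2 : ℝ} (hα1 : 0 < α1) (hα1' : α1 ≤ 1) (hα2 : 0 < α2) (hα2' : α2 ≤ 1)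
    (hγ1 : 0 ≤ γ1) (hγ2 : 0 ≤ γ2) (hγ : γ1 + γ2 = 1) (hr1 : 0 ≤ r1) (hr2 : 0 ≤ r2) :
    (γ1 * α1 + γ2 * α2) * EspP W P ((γ1 * r1 + γ2 * r2) / (γ1 * α1 + γ2 * α2)) ≤
      γ1 * (α1 * EspP W P (r1 / α1)) + γ2 * (α2 * EspP W P (r2 / α2)) := by
  have hαγ : 0 < γ1 * α1 + γ2 * α2 := by
    rcases (show 0 < γ1 ∨ 0 < γ2 by by_contra h; push_neg at h; linarith) with h | h
    · nlinarith
    · nlinarith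
  apply eps_le
  intro ε hε
  obtain ⟨d1, hd1mem, hd1⟩ :=
    Real.lt_sInf_add_pos (espP_nonempty W hW P hP1 (r1 / α1) (div_nonneg hr1 hα1.le)) hε
  obtain ⟨V1, hV1, hI1, rfl⟩ := hd1mem
  obtain ⟨d2, hd2mem, hd2⟩ :=
    Real.lt_sInf_add_pos (espP_nonempty W hW P hP1 (r2 / α2) (div_nonneg hr2 hα2.le)) hε
  obtain ⟨V2, hV2, hI2, rfl⟩ := hd2mem
  have hd1' : condKL P V1 W < EspP W P (r1 / α1) + ε := hd1
  have hd2' : condKL P V2 W < EspP W P (r2 / α2) + ε := hd2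
  have hαγne : (γ1 * α1 + γ2 * α2) ≠ 0 := hαγ.ne'
  set β1 := γ1 * α1 / (γ1 * α1 + γ2 * α2) with hβ1def
  set β2 := γ2 * α2 / (γ1 * α1 + γ2 * α2) with hβ2def
  have hβ1 : 0 ≤ β1 := by rw [hβ1def]; positivity
  have hβ2 : 0 ≤ β2 := by rw [hβ2def]; positivity
  have hβ : β1 + β2 = 1 := by rw [hβ1def, hβ2def]; field_simp
  have hVm := isChannel_mix hV1 hV2 hβ1 hβ2 hβ
  have hIm : mutInf P (fun a b => β1 * V1 a b + β2 * V2 a b) ≤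
      (γ1 * r1 + γ2 * r2) / (γ1 * α1 + γ2 * α2) := by
    have h0 := mutInf_mix P V1 V2 hP0 hV1.1 hV2.1 hβ1 hβ2 hβ
    have h1 := mul_le_mul_of_nonneg_left hI1 hβ1
    have h2 := mul_le_mul_of_nonneg_left hI2 hβ2
    have h3 : β1 * (r1 / α1) + β2 * (r2 / α2) =
        (γ1 * r1 + γ2 * r2) / (γ1 * α1 + γ2 * α2) := by
      rw [hβ1def, hβ2def]
      field_simp
    linarith
  have hEm : EspP W P ((γ1 * r1 + γ2 * r2) / (γ1 * α1 + γ2 * α2)) ≤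
      condKL P (fun a b => β1 * V1 a b + β2 * V2 a b) W :=
    espP_le W hW P hP0 hP1 _ hVm hIm
  have hDm := condKL_mix P V1 V2 W hP0 hV1.1 hV2.1 hW.1 hβ1 hβ2 hβ
  have e1 : (γ1 * α1 + γ2 * α2) * β1 = γ1 * α1 := by rw [hβ1def]; field_simp
  have e2 : (γ1 * α1 + γ2 * α2) * β2 = γ2 * α2 := by rw [hβ2def]; field_simp
  have hfin : (γ1 * α1 + γ2 * α2) *
      EspP W P ((γ1 * r1 + γ2 * r2) / (γ1 * α1 + γ2 * α2)) ≤
      γ1 * α1 * condKL P V1 W + γ2 * α2 * condKL P V2 W := by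
    calc (γ1 * α1 + γ2 * α2) * EspP W P ((γ1 * r1 + γ2 * r2) / (γ1 * α1 + γ2 * α2))
        ≤ (γ1 * α1 + γ2 * α2) * (β1 * condKL P V1 W + β2 * condKL P V2 W) :=
          mul_le_mul_of_nonneg_left (hEm.trans hDm) hαγ.le
      _ = (γ1 * α1 + γ2 * α2) * β1 * condKL P V1 W +
          (γ1 * α1 + γ2 * α2) * β2 * condKL P V2 W := by ring
      _ = γ1 * α1 * condKL P V1 W + γ2 * α2 * condKL P V2 W := by rw [e1, e2]
  have b1 : γ1 * α1 * condKL P V1 W ≤ γ1 * α1 * (EspP W P (r1 / α1) + ε) :=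
    mul_le_mul_of_nonneg_left hd1'.le (by positivity)
  have b2 : γ2 * α2 * condKL P V2 W ≤ γ2 * α2 * (EspP W P (r2 / α2) + ε) :=
    mul_le_mul_of_nonneg_left hd2'.le (by positivity)
  have hsmall : (γ1 * α1 + γ2 * α2) * ε ≤ 1 * ε := by
    apply mul_le_mul_of_nonneg_right _ hε.le
    nlinarith
  linarith [hfin, b1, b2, hsmall]

/-- Perspective inequality for `hTwo` (with `δ = 1 - α`, allowing `δ = 0`). -/
private lemma ph (W : X → Y → ℝ) (hW : IsChannel W) (lam : X × X → ℝ)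
    (hl0 : ∀ p, 0 ≤ lam p) (hl1 : ∑ p, lam p = 1)
    {δ1 δ2 γ1 γ2 T1 T2 : ℝ} (hδ1 : 0 ≤ δ1) (hδ2 : 0 ≤ δ2)
    (hγ1 : 0 ≤ γ1) (hγ2 : 0 ≤ γ2) (hγ : γ1 + γ2 = 1)
    (hT1 : 0 ≤ T1) (hT2 : 0 ≤ T2) (hδ1' : δ1 ≤ 1) (hδ2' : δ2 ≤ 1) :
    (γ1 * δ1 + γ2 * δ2) * hTwo W lam ((γ1 * T1 + γ2 * T2) / (γ1 * δ1 + γ2 * δ2)) ≤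
      γ1 * (δ1 * hTwo W lam (T1 / δ1)) + γ2 * (δ2 * hTwo W lam (T2 / δ2)) := by
  have hn1 : 0 ≤ γ1 * δ1 := mul_nonneg hγ1 hδ1
  have hn2 : 0 ≤ γ2 * δ2 := mul_nonneg hγ2 hδ2
  rcases eq_or_lt_of_le (add_nonneg hn1 hn2) with hδγ | hδγ
  · -- degenerate: both weights vanish
    have h1 : γ1 * δ1 = 0 := by linarith
    have h2 : γ2 * δ2 = 0 := by linarith
    rw [← hδγ, zero_mul]
    have e1 : γ1 * (δ1 * hTwo W lam (T1 / δ1)) = γ1 * δ1 * hTwo W lam (T1 / δ1) := by ring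
    have e2 : γ2 * (δ2 * hTwo W lam (T2 / δ2)) = γ2 * δ2 * hTwo W lam (T2 / δ2) := by ring
    rw [e1, e2, h1, h2, zero_mul, zero_mul, add_zero]
  · have hδγne : (γ1 * δ1 + γ2 * δ2) ≠ 0 := hδγ.ne'
    apply eps_le
    intro ε hε
    obtain ⟨d1, hd1mem, hd1⟩ :=
      Real.lt_sInf_add_pos (hTwo_nonempty W hW lam (T1 / δ1) (div_nonneg hT1 hδ1)) hε
    obtain ⟨U1, hU1, hc1, rfl⟩ := hd1mem
    obtain ⟨d2, hd2mem, hd2⟩ :=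
      Real.lt_sInf_add_pos (hTwo_nonempty W hW lam (T2 / δ2) (div_nonneg hT2 hδ2)) hε
    obtain ⟨U2, hU2, hc2, rfl⟩ := hd2mem
    have hd1' : condKL lam U1 (Wrej W) < hTwo W lam (T1 / δ1) + ε := hd1
    have hd2' : condKL lam U2 (Wrej W) < hTwo W lam (T2 / δ2) + ε := hd2
    set β1 := γ1 * δ1 / (γ1 * δ1 + γ2 * δ2) with hβ1def
    set β2 := γ2 * δ2 / (γ1 * δ1 + γ2 * δ2) with hβ2def
    have hβ1 : 0 ≤ β1 := by rw [hβ1def]; exact div_nonneg hn1 hδγ.le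
    have hβ2 : 0 ≤ β2 := by rw [hβ2def]; exact div_nonneg hn2 hδγ.le
    have hβ : β1 + β2 = 1 := by rw [hβ1def, hβ2def]; field_simp
    have hUm := isChannel_mix hU1 hU2 hβ1 hβ2 hβ
    -- constraint for the mixed channel
    have k1 : β1 * (T1 / δ1) ≤ γ1 * T1 / (γ1 * δ1 + γ2 * δ2) := by
      rcases eq_or_lt_of_le hδ1 with h | h
      · have hz : T1 / δ1 = 0 := by rw [← h, div_zero]
        rw [hz, mul_zero]
        exact div_nonneg (mul_nonneg hγ1 hT1) hδγ.le
      · apply le_of_eq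
        rw [hβ1def]
        have hδ1ne := h.ne'
        field_simp
    have k2 : β2 * (T2 / δ2) ≤ γ2 * T2 / (γ1 * δ1 + γ2 * δ2) := by
      rcases eq_or_lt_of_le hδ2 with h | h
      · have hz : T2 / δ2 = 0 := by rw [← h, div_zero]
        rw [hz, mul_zero]
        exact div_nonneg (mul_nonneg hγ2 hT2) hδγ.le
      · apply le_of_eq
        rw [hβ2def]
        have hδ2ne := h.ne'
        field_simp
    have hcm : condKL lam (fun p y => β1 * U1 p y + β2 * U2 p y) (Wacc W) ≤
        (γ1 * T1 + γ2 * T2) / (γ1 * δ1 + γ2 * δ2) := by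
      have h0 := condKL_mix lam U1 U2 (Wacc W) hl0 hU1.1 hU2.1 (wacc_channel hW).1 hβ1 hβ2 hβ
      have h1 := mul_le_mul_of_nonneg_left hc1 hβ1
      have h2 := mul_le_mul_of_nonneg_left hc2 hβ2
      have h3 : γ1 * T1 / (γ1 * δ1 + γ2 * δ2) + γ2 * T2 / (γ1 * δ1 + γ2 * δ2) =
          (γ1 * T1 + γ2 * T2) / (γ1 * δ1 + γ2 * δ2) := by
        rw [← add_div]
      linarith
    have hHm : hTwo W lam ((γ1 * T1 + γ2 * T2) / (γ1 * δ1 + γ2 * δ2)) ≤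
        condKL lam (fun p y => β1 * U1 p y + β2 * U2 p y) (Wrej W) :=
      hTwo_le W hW lam hl0 hl1 _ hUm hcm
    have hDm := condKL_mix lam U1 U2 (Wrej W) hl0 hU1.1 hU2.1 (wrej_channel hW).1 hβ1 hβ2 hβ
    have e1 : (γ1 * δ1 + γ2 * δ2) * β1 = γ1 * δ1 := by rw [hβ1def]; field_simp
    have e2 : (γ1 * δ1 + γ2 * δ2) * β2 = γ2 * δ2 := by rw [hβ2def]; field_simp
    have hfin : (γ1 * δ1 + γ2 * δ2) *
        hTwo W lam ((γ1 * T1 + γ2 * T2) / (γ1 * δ1 + γ2 * δ2)) ≤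
        γ1 * δ1 * condKL lam U1 (Wrej W) + γ2 * δ2 * condKL lam U2 (Wrej W) := by
      calc (γ1 * δ1 + γ2 * δ2) * hTwo W lam ((γ1 * T1 + γ2 * T2) / (γ1 * δ1 + γ2 * δ2))
          ≤ (γ1 * δ1 + γ2 * δ2) *
              (β1 * condKL lam U1 (Wrej W) + β2 * condKL lam U2 (Wrej W)) :=
            mul_le_mul_of_nonneg_left (hHm.trans hDm) hδγ.le
        _ = (γ1 * δ1 + γ2 * δ2) * β1 * condKL lam U1 (Wrej W) +
            (γ1 * δ1 + γ2 * δ2) * β2 * condKL lam U2 (Wrej W) := by ring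
        _ = γ1 * δ1 * condKL lam U1 (Wrej W) + γ2 * δ2 * condKL lam U2 (Wrej W) := by
            rw [e1, e2]
    have b1 : γ1 * δ1 * condKL lam U1 (Wrej W) ≤
        γ1 * δ1 * (hTwo W lam (T1 / δ1) + ε) := mul_le_mul_of_nonneg_left hd1'.le hn1
    have b2 : γ2 * δ2 * condKL lam U2 (Wrej W) ≤
        γ2 * δ2 * (hTwo W lam (T2 / δ2) + ε) := mul_le_mul_of_nonneg_left hd2'.le hn2
    have hsmall : (γ1 * δ1 + γ2 * δ2) * ε ≤ 1 * ε := by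
      apply mul_le_mul_of_nonneg_right _ hε.le
      nlinarith
    linarith [hfin, b1, b2, hsmall]

end AuxLemmas3
noncomputable section AuxLemmas4

variable {X Y : Type} [Fintype X] [Fintype Y]

private lemma efun_bdd (W : X → Y → ℝ) (hW : IsChannel W) (P : X → ℝ)
    (hP0 : ∀ a, 0 ≤ P a) (hP1 : ∑ a, P a = 1) (lam : X × X → ℝ)
    (hl0 : ∀ p, 0 ≤ lam p) (hl1 : ∑ p, lam p = 1)
    (R x α : ℝ) (hR : 0 ≤ R) (hα : 0 < α) (hα1 : α ≤ 1) :
    BddBelow {v | ∃ R'' R' T : ℝ, R ≤ R' ∧ R' ≤ R'' ∧ 0 ≤ T ∧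
      α * EspP W P (R'' / α) + R' - R + T ≤ x ∧
      v = α * EspP W P (R' / α) + R'' - R + (1 - α) * hTwo W lam (T / (1 - α))} := by
  refine ⟨-1, fun v hv => ?_⟩
  obtain ⟨R'', R', T, h1, h2, h3, _, rfl⟩ := hv
  have hE : -1 ≤ EspP W P (R' / α) :=
    espP_ge W hW P hP0 hP1 _ (div_nonneg (hR.trans h1) hα.le)
  have hH : -1 ≤ hTwo W lam (T / (1 - α)) :=
    hTwo_ge W hW lam hl0 hl1 _ (div_nonneg h3 (by linarith))
  have p1 := mul_le_mul_of_nonneg_left hE hα.le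
  have p2 := mul_le_mul_of_nonneg_left hH (show (0:ℝ) ≤ 1 - α by linarith)
  have hRR : R ≤ R'' := h1.trans h2
  simp only [mul_neg_one] at p1 p2
  linarith

private lemma efun_nonempty (W : X → Y → ℝ) (hW : IsChannel W) (P : X → ℝ)
    (hP0 : ∀ a, 0 ≤ P a) (hP1 : ∑ a, P a = 1) (lam : X × X → ℝ)
    (R x α : ℝ) (hR : 0 ≤ R) (hx : 0 ≤ x) (hα : 0 < α) :
    Set.Nonempty {v | ∃ R'' R' T : ℝ, R ≤ R' ∧ R' ≤ R'' ∧ 0 ≤ T ∧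
      α * EspP W P (R'' / α) + R' - R + T ≤ x ∧
      v = α * EspP W P (R' / α) + R'' - R + (1 - α) * hTwo W lam (T / (1 - α))} := by
  refine ⟨_, max R (α * mutInf P W), R, 0, le_refl R, le_max_left _ _, le_refl 0, ?_, rfl⟩
  have hmem : mutInf P W ≤ max R (α * mutInf P W) / α := by
    rw [le_div_iff₀ hα]
    calc mutInf P W * α = α * mutInf P W := mul_comm _ _
      _ ≤ max R (α * mutInf P W) := le_max_right _ _
  have hE : EspP W P (max R (α * mutInf P W) / α) ≤ 0 := by
    have h := espP_le W hW P hP0 hP1 _ hW hmem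
    rwa [condKL_self] at h
  have := mul_le_mul_of_nonneg_left hE hα.le
  rw [mul_zero] at this
  linarith

private lemma efun_le (W : X → Y → ℝ) (hW : IsChannel W) (P : X → ℝ)
    (hP0 : ∀ a, 0 ≤ P a) (hP1 : ∑ a, P a = 1) (lam : X × X → ℝ)
    (hl0 : ∀ p, 0 ≤ lam p) (hl1 : ∑ p, lam p = 1)
    (R x α : ℝ) (hR : 0 ≤ R) (hα : 0 < α) (hα1 : α ≤ 1)
    {R'' R' T : ℝ} (h1 : R ≤ R') (h2 : R' ≤ R'') (h3 : 0 ≤ T)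
    (h4 : α * EspP W P (R'' / α) + R' - R + T ≤ x) :
    Efun W lam P R x α ≤
      α * EspP W P (R' / α) + R'' - R + (1 - α) * hTwo W lam (T / (1 - α)) :=
  csInf_le (efun_bdd W hW P hP0 hP1 lam hl0 hl1 R x α hR hα hα1)
    ⟨R'', R', T, h1, h2, h3, h4, rfl⟩

private lemma efun_exists (W : X → Y → ℝ) (hW : IsChannel W) (P : X → ℝ)
    (hP0 : ∀ a, 0 ≤ P a) (hP1 : ∑ a, P a = 1) (lam : X × X → ℝ)
    (R x α : ℝ) (hR : 0 ≤ R) (hx : 0 ≤ x) (hα : 0 < α)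
    {ε : ℝ} (hε : 0 < ε) :
    ∃ R'' R' T : ℝ, R ≤ R' ∧ R' ≤ R'' ∧ 0 ≤ T ∧
      α * EspP W P (R'' / α) + R' - R + T ≤ x ∧
      α * EspP W P (R' / α) + R'' - R + (1 - α) * hTwo W lam (T / (1 - α)) <
        Efun W lam P R x α + ε := by
  obtain ⟨v, hvmem, hv⟩ :=
    Real.lt_sInf_add_pos (efun_nonempty W hW P hP0 hP1 lam R x α hR hx hα) hε
  obtain ⟨R'', R', T, h1, h2, h3, h4, rfl⟩ := hvmem
  exact ⟨R'', R', T, h1, h2, h3, h4, hv⟩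

end AuxLemmas4

/-- for fixed `(R, x, P, λ)` with `E_r(R,P) ≥ x`, the map
`α ↦ E(R,x,α,P,λ)` is convex on `[α*, 1]`, where `α*` is the unique solution of
`α·E_r(R/α,P) = x` (with the convention `α* = R / I(P,W)` when `x = 0`). -/
theorem Efun_convexOn_alpha {X Y : Type} [Fintype X] [Fintype Y]
    (W : X → Y → ℝ) (hW : IsChannel W)
    (P : X → ℝ) (hP0 : ∀ a, 0 ≤ P a) (hP1 : ∑ a, P a = 1)
    (lam : X × X → ℝ) (hl0 : ∀ p, 0 ≤ lam p) (hl1 : ∑ p, lam p = 1)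
    (R x : ℝ) (hR : 0 ≤ R) (hx : 0 ≤ x)
    (hfeas : x ≤ ErP W P R)
    (αs : ℝ) (hαs : αs ∈ Set.Ioc (0 : ℝ) 1)
    (hsol : x ≠ 0 → αs * ErP W P (R / αs) = x)
    (hsol0 : x = 0 → αs = R / mutInf P W) :
    ConvexOn ℝ (Set.Icc αs 1) (fun α => Efun W lam P R x α) := by
  obtain ⟨hαs0, hαs1⟩ := hαs
  refine ⟨convex_Icc αs 1, ?_⟩
  intro a ha b hb γ1 γ2 hγ1 hγ2 hγ
  simp only [smul_eq_mul]
  have ha0 : 0 < a := lt_of_lt_of_le hαs0 ha.1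
  have ha1 : a ≤ 1 := ha.2
  have hb0 : 0 < b := lt_of_lt_of_le hαs0 hb.1
  have hb1 : b ≤ 1 := hb.2
  have hc0 : 0 < γ1 * a + γ2 * b := by
    rcases (show 0 < γ1 ∨ 0 < γ2 by by_contra h; push_neg at h; linarith) with h | h
    · nlinarith
    · nlinarith
  have hc1 : γ1 * a + γ2 * b ≤ 1 := by nlinarith
  show Efun W lam P R x (γ1 * a + γ2 * b) ≤
    γ1 * Efun W lam P R x a + γ2 * Efun W lam P R x b
  apply eps_le
  intro ε hε
  obtain ⟨R''1, R'1, T1, hR'1, hR''1, hT1, hbud1, hv1⟩ :=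
    efun_exists W hW P hP0 hP1 lam R x a hR hx ha0 hε
  obtain ⟨R''2, R'2, T2, hR'2, hR''2, hT2, hbud2, hv2⟩ :=
    efun_exists W hW P hP0 hP1 lam R x b hR hx hb0 hε
  have hR''1n : 0 ≤ R''1 := hR.trans (hR'1.trans hR''1)
  have hR''2n : 0 ≤ R''2 := hR.trans (hR'2.trans hR''2)
  have hR'1n : 0 ≤ R'1 := hR.trans hR'1
  have hR'2n : 0 ≤ R'2 := hR.trans hR'2
  -- perspective inequalities
  have hpe'' := pe W hW P hP0 hP1 ha0 ha1 hb0 hb1 hγ1 hγ2 hγ hR''1n hR''2n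
  have hpe' := pe W hW P hP0 hP1 ha0 ha1 hb0 hb1 hγ1 hγ2 hγ hR'1n hR'2n
  have hph := ph W hW lam hl0 hl1 (δ1 := 1 - a) (δ2 := 1 - b)
    (by linarith) (by linarith) hγ1 hγ2 hγ hT1 hT2 (by linarith) (by linarith)
  have hδc : γ1 * (1 - a) + γ2 * (1 - b) = 1 - (γ1 * a + γ2 * b) := by
    have : γ1 * (1 - a) + γ2 * (1 - b) = (γ1 + γ2) - (γ1 * a + γ2 * b) := by ring
    rw [this, hγ]
  rw [hδc] at hph
  -- useful linear facts
  have hRx : γ1 * R + γ2 * R = R := by rw [← add_mul, hγ, one_mul]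
  have hxx : γ1 * x + γ2 * x = x := by rw [← add_mul, hγ, one_mul]
  have hεε : γ1 * ε + γ2 * ε = ε := by rw [← add_mul, hγ, one_mul]
  -- combined budget constraint
  have hbudc : (γ1 * a + γ2 * b) * EspP W P ((γ1 * R''1 + γ2 * R''2) / (γ1 * a + γ2 * b)) +
      (γ1 * R'1 + γ2 * R'2) - R + (γ1 * T1 + γ2 * T2) ≤ x := by
    have m1 := mul_le_mul_of_nonneg_left hbud1 hγ1
    have m2 := mul_le_mul_of_nonneg_left hbud2 hγ2
    nlinarith [hpe'', m1, m2]
  -- combined point is feasible, giving an upper bound on Efun at c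
  have hfc := efun_le W hW P hP0 hP1 lam hl0 hl1 R x (γ1 * a + γ2 * b) hR hc0 hc1
    (R'' := γ1 * R''1 + γ2 * R''2) (R' := γ1 * R'1 + γ2 * R'2) (T := γ1 * T1 + γ2 * T2)
    (by nlinarith [mul_le_mul_of_nonneg_left hR'1 hγ1, mul_le_mul_of_nonneg_left hR'2 hγ2])
    (by nlinarith [mul_le_mul_of_nonneg_left hR''1 hγ1, mul_le_mul_of_nonneg_left hR''2 hγ2])
    (add_nonneg (mul_nonneg hγ1 hT1) (mul_nonneg hγ2 hT2))
    hbudc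
  -- combine everything
  have n1 := mul_le_mul_of_nonneg_left hv1.le hγ1
  have n2 := mul_le_mul_of_nonneg_left hv2.le hγ2
  nlinarith [hfc, hpe', hph, n1, n2]
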